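/- (Inversion of the first matrix: transformation of the distinguished point.) Assume u₁₂u₁₃ ≠ 0, h₂ ≠ h₃, and h₁, h₂, h₃ are all nonzero. Let L̃ and M̃ denote the quantities L and M computed with h₁, h₂, h₃ replaced by h₁⁻¹, h₂⁻¹, h₃⁻¹ (and the same entries u_{ij}), i.e. the distinguished point of the pair (A⁻¹, B). Then L̃ = L + M(h₂+h₃) and M̃ = −h₂h₃M. -/

import Mathlib

open Matrix

/-- inversion of the first matrix, transformation of the
distinguished point: Ltil = L + M(h₂+h₃), Mtil = −h₂h₃M. -/
theorem inversion_distinguished_point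
    (h₁ h₂ h₃ : ℂ) (B : Matrix (Fin 3) (Fin 3) ℂ)
    (hu : B 0 1 * B 0 2 ≠ 0) (h23 : h₂ ≠ h₃)
    (h₁0 : h₁ ≠ 0) (h₂0 : h₂ ≠ 0) (h₃0 : h₃ ≠ 0)
    (L M Ltil Mtil : ℂ)
    (hL : L = (B 0 1 * h₃ * (B 0 1 * B 1 2 - B 0 2 * B 1 1)
        + B 0 2 * h₂ * (B 0 1 * B 2 2 - B 0 2 * B 2 1))
        / (B 0 1 * B 0 2 * (h₃ - h₂)))
    (hM : M = -(B 0 1 * (B 0 1 * B 1 2 - B 0 2 * B 1 1)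
        + B 0 2 * (B 0 1 * B 2 2 - B 0 2 * B 2 1))
        / (B 0 1 * B 0 2 * (h₃ - h₂)))
    (hLtil : Ltil = (B 0 1 * h₃⁻¹ * (B 0 1 * B 1 2 - B 0 2 * B 1 1)
        + B 0 2 * h₂⁻¹ * (B 0 1 * B 2 2 - B 0 2 * B 2 1))
        / (B 0 1 * B 0 2 * (h₃⁻¹ - h₂⁻¹)))
    (hMtil : Mtil = -(B 0 1 * (B 0 1 * B 1 2 - B 0 2 * B 1 1)
        + B 0 2 * (B 0 1 * B 2 2 - B 0 2 * B 2 1))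
        / (B 0 1 * B 0 2 * (h₃⁻¹ - h₂⁻¹))) :
    Ltil = L + M * (h₂ + h₃) ∧ Mtil = -(h₂ * h₃) * M := by
  have h1 : B 0 1 ≠ 0 := fun h => hu (by simp [h])
  have h2 : B 0 2 ≠ 0 := fun h => hu (by simp [h])
  have h32 : h₃ - h₂ ≠ 0 := sub_ne_zero.mpr (Ne.symm h23)
  have h32' : h₃⁻¹ - h₂⁻¹ ≠ 0 := by
    intro h
    apply h23
    have := sub_eq_zero.mp h
    field_simp at this
    linear_combination this
  have hd : B 0 1 * B 0 2 * h₂ - B 0 1 * B 0 2 * h₃ ≠ 0 := by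
    intro h; exact h32 (by linear_combination (-(B 0 1 * B 0 2)⁻¹) * h - (mul_inv_cancel₀ hu) * (h₃ - h₂))
  have hd' : -(B 0 2 * B 0 1 * h₃) + B 0 2 * B 0 1 * h₂ ≠ 0 := by
    intro h; exact hd (by linear_combination h)
  subst hL hM hLtil hMtil
  constructor <;> field_simp <;> ring
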